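/- Let T > 0, let X : [0,T] → ℝ be continuous and nonnegative, and let a, b : [0,T] → ℝ be nonnegative and monotone nondecreasing. Suppose that for every t ∈ [0,T] such that X(t) = max{X(s) : s ∈ [0,t]}, the inequality X(t)² ≤ X(0)² + a(t)·X(0) + b(t)·X(t) holds. Then X(t) ≤ X(0) + a(t) + b(t) for every t ∈ [0,T]. -/
import Mathlib


open Set

/-- **Maximum-point argument avoiding Grönwall's inequality.**
Let `T > 0`, `X : [0,T] → ℝ` continuous and nonnegative, and `a, b : [0,T] → ℝ`
nonnegative and monotone nondecreasing.  If for every `t ∈ [0,T]` with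
`X t = max {X s : s ∈ [0,t]}` one has `X t ² ≤ X 0 ² + a t · X 0 + b t · X t`,
then `X t ≤ X 0 + a t + b t` for every `t ∈ [0,T]`. -/
theorem maximum_point_bound
    (T : ℝ) (hT : 0 < T) (X a b : ℝ → ℝ)
    (hX : ContinuousOn X (Icc 0 T))
    (hXnn : ∀ t ∈ Icc (0 : ℝ) T, 0 ≤ X t)
    (hann : ∀ t ∈ Icc (0 : ℝ) T, 0 ≤ a t)
    (hbnn : ∀ t ∈ Icc (0 : ℝ) T, 0 ≤ b t)
    (hamono : MonotoneOn a (Icc 0 T))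
    (hbmono : MonotoneOn b (Icc 0 T))
    (hineq : ∀ t ∈ Icc (0 : ℝ) T, (∀ s ∈ Icc 0 t, X s ≤ X t) →
        X t ^ 2 ≤ X 0 ^ 2 + a t * X 0 + b t * X t) :
    ∀ t ∈ Icc (0 : ℝ) T, X t ≤ X 0 + a t + b t := by
  intro t ht
  obtain ⟨ht0, htT⟩ := ht
  have hsub : Icc (0:ℝ) t ⊆ Icc 0 T := Icc_subset_Icc le_rfl htT
  obtain ⟨m, hm, hmax⟩ := (isCompact_Icc (a := (0:ℝ)) (b := t)).exists_isMaxOn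
    (nonempty_Icc.mpr ht0) (hX.mono hsub)
  have hmT : m ∈ Icc (0:ℝ) T := hsub hm
  have hmaxm : ∀ s ∈ Icc (0:ℝ) m, X s ≤ X m := fun s hs =>
    hmax (Icc_subset_Icc le_rfl hm.2 hs)
  have hq := hineq m hmT hmaxm
  have hXm : X m ≤ X 0 + a m + b m := by
    nlinarith [hXnn m hmT, hXnn 0 (hsub (left_mem_Icc.mpr ht0)), hann m hmT,
      hbnn m hmT, sq_nonneg (X m - X 0)]
  calc X t ≤ X m := hmax (right_mem_Icc.mpr ht0)
    _ ≤ X 0 + a m + b m := hXm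
    _ ≤ X 0 + a t + b t := by
        have := hamono hmT ⟨ht0, htT⟩ hm.2
        have := hbmono hmT ⟨ht0, htT⟩ hm.2
        linarith
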